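/- The only σ-periodic points of the big subshift Σ are the two constant sequences a^∞ and b^∞: if ω ∈ Σ and σ^p ω = ω for some p ≥ 1, then ω is constant. -/

import Mathlib

/-- Vertex reached after `n` moves: (number of `false` moves, number of `true` moves). -/
def vertexAt (γ : ℕ → Bool) (n : ℕ) : ℕ × ℕ :=
  (((Finset.range n).filter fun i => γ i = false).card,
   ((Finset.range n).filter fun i => γ i = true).card)

def childOf (v : ℕ × ℕ) (m : Bool) : ℕ × ℕ :=
  if m then (v.1, v.2 + 1) else (v.1 + 1, v.2)

def MoveMin (ξ : ℕ × ℕ → Bool) (v : ℕ × ℕ) (m : Bool) : Prop :=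
  (childOf v m).1 = 0 ∨ (childOf v m).2 = 0 ∨ m = !ξ (childOf v m)

def MoveMax (ξ : ℕ × ℕ → Bool) (v : ℕ × ℕ) (m : Bool) : Prop :=
  (childOf v m).1 = 0 ∨ (childOf v m).2 = 0 ∨ m = ξ (childOf v m)

def IsMinEdge (ξ : ℕ × ℕ → Bool) (γ : ℕ → Bool) (i : ℕ) : Prop :=
  MoveMin ξ (vertexAt γ i) (γ i)

def IsMaxEdge (ξ : ℕ × ℕ → Bool) (γ : ℕ → Bool) (i : ℕ) : Prop :=
  MoveMax ξ (vertexAt γ i) (γ i)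

def XMin (ξ : ℕ × ℕ → Bool) : Set (ℕ → Bool) := {γ | ∀ i, IsMinEdge ξ γ i}

def XMax (ξ : ℕ × ℕ → Bool) : Set (ℕ → Bool) := {γ | ∀ i, IsMaxEdge ξ γ i}

def XPrime (ξ : ℕ × ℕ → Bool) : Set (ℕ → Bool) :=
  {γ | ∃ δ ∈ XMin ξ ∪ XMax ξ, ∃ N : ℕ, ∀ n, N ≤ n → γ n = δ n}

/-- The all-ξ-minimal finite path (list of moves) from the root to a vertex. -/
def minPath (ξ : ℕ × ℕ → Bool) : ℕ × ℕ → List Bool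
  | (0, 0) => []
  | (x + 1, 0) => minPath ξ (x, 0) ++ [false]
  | (0, y + 1) => minPath ξ (0, y) ++ [true]
  | (x + 1, y + 1) =>
      if ξ (x + 1, y + 1) then minPath ξ (x, y + 1) ++ [false]
      else minPath ξ (x + 1, y) ++ [true]
  termination_by p => p.1 + p.2

/-- The all-ξ-maximal finite path (list of moves) from the root to a vertex. -/
def maxPath (ξ : ℕ × ℕ → Bool) : ℕ × ℕ → List Bool
  | (0, 0) => []
  | (x + 1, 0) => maxPath ξ (x, 0) ++ [false]
  | (0, y + 1) => maxPath ξ (0, y) ++ [true]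
  | (x + 1, y + 1) =>
      if ξ (x + 1, y + 1) then maxPath ξ (x + 1, y) ++ [true]
      else maxPath ξ (x, y + 1) ++ [false]
  termination_by p => p.1 + p.2

open Classical in
/-- The adic (Vershik) transformation determined by ξ (identity where undefined). -/
noncomputable def adicT (ξ : ℕ × ℕ → Bool) (γ : ℕ → Bool) : ℕ → Bool :=
  if h : ∃ i, ¬ IsMaxEdge ξ γ i then
    let i0 := Nat.find h
    let v := vertexAt γ (i0 + 1)
    let src : ℕ × ℕ := if ξ v then (v.1, v.2 - 1) else (v.1 - 1, v.2)
    fun n =>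
      if n < i0 then (minPath ξ src).getD n false
      else if n = i0 then ξ v
      else γ n
  else γ

open Classical in
/-- The inverse adic transformation determined by ξ (identity where undefined). -/
noncomputable def adicTInv (ξ : ℕ × ℕ → Bool) (γ : ℕ → Bool) : ℕ → Bool :=
  if h : ∃ i, ¬ IsMinEdge ξ γ i then
    let i0 := Nat.find h
    let v := vertexAt γ (i0 + 1)
    let src : ℕ × ℕ := if ξ v then (v.1 - 1, v.2) else (v.1, v.2 - 1)
    fun n =>
      if n < i0 then (maxPath ξ src).getD n false
      else if n = i0 then !ξ v
      else γ n
  else γ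

/-- ℤ-iterates of the adic transformation. -/
noncomputable def adicIter (ξ : ℕ × ℕ → Bool) : ℤ → (ℕ → Bool) → (ℕ → Bool)
  | Int.ofNat n, γ => (adicT ξ)^[n] γ
  | Int.negSucc n, γ => (adicTInv ξ)^[n + 1] γ

/-- The k-coding of the orbit of γ: symbols are the initial segments of length k. -/
noncomputable def omegaCode (ξ : ℕ × ℕ → Bool) (k : ℕ) (γ : ℕ → Bool) : ℤ → List Bool :=
  fun t => (List.range k).map (adicIter ξ t γ)

/-- Ordered list of all initial segments from the root to (x,y), in increasing ξ-order. -/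
def segList (ξ : ℕ × ℕ → Bool) : ℕ × ℕ → List (List Bool)
  | (0, 0) => [[]]
  | (x + 1, 0) => (segList ξ (x, 0)).map (· ++ [false])
  | (0, y + 1) => (segList ξ (0, y)).map (· ++ [true])
  | (x + 1, y + 1) =>
      if ξ (x + 1, y + 1) then
        (segList ξ (x, y + 1)).map (· ++ [false]) ++ (segList ξ (x + 1, y)).map (· ++ [true])
      else
        (segList ξ (x + 1, y)).map (· ++ [true]) ++ (segList ξ (x, y + 1)).map (· ++ [false])
  termination_by p => p.1 + p.2

/-- Level-k coded basic block at a vertex (x,y) with x+y ≥ k, a word over the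
alphabet of initial segments of length k. -/
def codedBlock (ξ : ℕ × ℕ → Bool) (k : ℕ) : ℕ × ℕ → List (List Bool)
  | (0, 0) => segList ξ (0, 0)
  | (x + 1, 0) => if x + 1 ≤ k then segList ξ (x + 1, 0) else [List.replicate k false]
  | (0, y + 1) => if y + 1 ≤ k then segList ξ (0, y + 1) else [List.replicate k true]
  | (x + 1, y + 1) =>
      if x + 1 + (y + 1) ≤ k then segList ξ (x + 1, y + 1)
      else if ξ (x + 1, y + 1) then codedBlock ξ k (x, y + 1) ++ codedBlock ξ k (x + 1, y)
      else codedBlock ξ k (x + 1, y) ++ codedBlock ξ k (x, y + 1)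
  termination_by p => p.1 + p.2

/-- Basic block over the alphabet {a,b}, with a = `false` and b = `true`. -/
def basicBlock (ξ : ℕ × ℕ → Bool) : ℕ × ℕ → List Bool
  | (0, 0) => []
  | (_ + 1, 0) => [false]
  | (0, _ + 1) => [true]
  | (x + 1, y + 1) =>
      if ξ (x + 1, y + 1) then basicBlock ξ (x, y + 1) ++ basicBlock ξ (x + 1, y)
      else basicBlock ξ (x + 1, y) ++ basicBlock ξ (x, y + 1)
  termination_by p => p.1 + p.2

/-- The finite word ω_s ω_{s+1} ... ω_{t-1}. -/
def wordAt (ω : ℤ → List Bool) (s t : ℤ) : List (List Bool) :=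
  (List.range (t - s).toNat).map fun u => ω (s + u)

/-- A ξ-consistent factoring scheme for ω ∈ 𝒫_k^ℤ: `cuts j` is the set of starting
positions of the blocks of the level-(k+j) factorization, and `vert j s` is the
vertex whose coded basic block is the block starting at the cut `s`. -/
def IsConsistentScheme (ξ : ℕ × ℕ → Bool) (k : ℕ) (ω : ℤ → List Bool)
    (cuts : ℕ → Set ℤ) (vert : ℕ → ℤ → ℕ × ℕ) : Prop :=
  (∀ j : ℕ, ∀ M : ℤ, ∃ s ∈ cuts j, s < M) ∧
  (∀ j : ℕ, ∀ M : ℤ, ∃ t ∈ cuts j, M < t) ∧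
  (∀ j : ℕ, ∀ s ∈ cuts j, ∀ t ∈ cuts j, s < t → (∀ u ∈ cuts j, ¬(s < u ∧ u < t)) →
      (vert j s).1 + (vert j s).2 = k + j ∧
      wordAt ω s t = codedBlock ξ k (vert j s)) ∧
  (∀ j : ℕ, cuts (j + 1) ⊆ cuts j) ∧
  (∀ j : ℕ, ∀ s ∈ cuts (j + 1), ∀ t ∈ cuts (j + 1), s < t →
      (∀ u ∈ cuts (j + 1), ¬(s < u ∧ u < t)) →
      ∀ x y : ℕ, vert (j + 1) s = (x + 1, y + 1) →
        ∃ m ∈ cuts j, s < m ∧ m < t ∧ (∀ u ∈ cuts j, s < u → u < t → u = m) ∧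
          (if ξ (x + 1, y + 1)
            then vert j s = (x, y + 1) ∧ vert j m = (x + 1, y)
            else vert j s = (x + 1, y) ∧ vert j m = (x, y + 1)))

/-- The natural factoring scheme of the k-coding of γ: a level-(k+j) block begins at
coordinate t exactly when T^t γ begins with an all-ξ-minimal path to its level-(k+j) vertex. -/
noncomputable def natCuts (ξ : ℕ × ℕ → Bool) (k : ℕ) (γ : ℕ → Bool) : ℕ → Set ℤ :=
  fun j => {t | ∀ i < k + j, IsMinEdge ξ (adicIter ξ t γ) i}

noncomputable def natVert (ξ : ℕ × ℕ → Bool) (k : ℕ) (γ : ℕ → Bool) : ℕ → ℤ → ℕ × ℕ :=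
  fun j t => vertexAt (adicIter ξ t γ) (k + j)

open Classical in
/-- The return time r_n of the Kink Lemma, where `g` is the move of γ leaving (i,j). -/
noncomputable def kinkReturn (ξ : ℕ × ℕ → Bool) (i j : ℕ) (g : Bool) : ℕ :=
  let n := i + j
  if MoveMax ξ (i, j) g ∧ MoveMin ξ (i, j) (!g) then n.choose j
  else if (MoveMin ξ (i, j) g ∧ MoveMin ξ (i, j) (!g) ∧ g = true) ∨
          (MoveMax ξ (i, j) g ∧ MoveMax ξ (i, j) (!g) ∧ g = false) then (n + 1).choose (j + 1)
  else if (MoveMin ξ (i, j) g ∧ MoveMin ξ (i, j) (!g) ∧ g = false) ∨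
          (MoveMax ξ (i, j) g ∧ MoveMax ξ (i, j) (!g) ∧ g = true) then (n + 1).choose j
  else (n + 1).choose j + n.choose (j + 1)

/-- Convert a length-k list of moves to a function `Fin k → Bool`. -/
def segFn (k : ℕ) (w : List Bool) : Fin k → Bool := fun idx => w.getD idx false

/-- The subshift Σ_k of the k-codings: sequences all of whose finite subblocks occur
in some level-k coded basic block. -/
def SigmaK (ξ : ℕ × ℕ → Bool) (k : ℕ) : Set (ℤ → (Fin k → Bool)) :=
  {ω | ∀ (s : ℤ) (l : ℕ), ∃ p : ℕ × ℕ,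
    ((List.range l).map fun u => ω (s + u)) <:+: (codedBlock ξ k p).map (segFn k)}

/-- The subshift Σ_ξ ⊆ {a,b}^ℤ of sequences all of whose finite subblocks occur in
some basic block B_ξ(x,y). -/
def SigmaXi (ξ : ℕ × ℕ → Bool) : Set (ℤ → Bool) :=
  {ω | ∀ (s : ℤ) (l : ℕ), ∃ p : ℕ × ℕ,
    ((List.range l).map fun u => ω (s + u)) <:+: basicBlock ξ p}

/-- The big subshift Σ: sequences all of whose finite subblocks occur in some basic
block B_ξ(x,y) for some ordering ξ. -/
def BigShift : Set (ℤ → Bool) :=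
  {ω | ∀ (s : ℤ) (l : ℕ), ∃ (ξ : ℕ × ℕ → Bool) (p : ℕ × ℕ),
    ((List.range l).map fun u => ω (s + u)) <:+: basicBlock ξ p}

namespace S16

/-! ### Window and counting lemmas for a periodic point -/

variable (ω : ℤ → Bool)

def win (c : ℤ) (L : ℕ) : List Bool := (List.range L).map (fun u : ℕ => ω (c + (u:ℤ)))

theorem coe_win (s : ℤ) (l : ℕ) :
    ((List.range l).map fun u => ω (s + u)) = win ω s l := by
  show List.map _ ((List.range l).flatMap fun a => [((a:ℕ):ℤ)]) = _
  unfold win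
  generalize List.range l = L
  induction L with
  | nil => rfl
  | cons a L ih => simp_all

theorem win_length (c : ℤ) (L : ℕ) : (win ω c L).length = L := by simp [win]

theorem win_add (c : ℤ) (L1 L2 : ℕ) : win ω c (L1 + L2) = win ω c L1 ++ win ω (c + L1) L2 := by
  simp only [win, List.range_add, List.map_append, List.map_map]
  congr 1
  apply List.map_congr_left
  intro u _
  simp only [Function.comp_apply]
  congr 1
  push_cast
  ring

theorem win_one (c : ℤ) : win ω c 1 = [ω c] := by simp [win, List.range_succ]

theorem win_getElem (c : ℤ) (L : ℕ) (i : ℕ) (h : i < (win ω c L).length) :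
    (win ω c L)[i] = ω (c + (i:ℤ)) := by
  simp [win]

theorem win_infix (w : List Bool) (c : ℤ) (L : ℕ) (h : w <:+: win ω c L) :
    ∃ c' : ℤ, w = win ω c' w.length := by
  obtain ⟨s, t, hst⟩ := h
  refine ⟨c + s.length, ?_⟩
  have hst' : s ++ (w ++ t) = win ω c L := by rw [← List.append_assoc]; exact hst
  have hlen : s.length + (w.length + t.length) = L := by
    have := congrArg List.length hst'
    simpa [win] using this
  apply List.ext_getElem (by simp [win])
  intro i h1 h2
  have e2 : (s ++ (w ++ t))[s.length + i]'(by simp; omega) = w[i]'h1 := by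
    rw [List.getElem_append_right (by omega)]
    simp only [Nat.add_sub_cancel_left]
    rw [List.getElem_append_left h1]
  rw [← e2]
  have e3 : ∀ (j : ℕ) (hj : j < (win ω c L).length), (s ++ (w ++ t))[j]'(by rw [hst']; exact hj) = ω (c + (j:ℤ)) := by
    intro j hj
    have h5 := win_getElem ω c L j hj
    rw [← h5]
    congr 1
  rw [e3 (s.length + i) (by rw [win_length]; omega)]
  rw [win_getElem]
  congr 1
  push_cast
  ring

variable (p : ℕ)

theorem per_point (hper : (fun t => ω (t + p)) = ω) (c : ℤ) : ω (c + p) = ω c := congrFun hper c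

def cnt (b : Bool) (c : ℤ) (L : ℕ) : ℕ := ((win ω c L).count b)

theorem cnt_add (b : Bool) (c : ℤ) (L1 L2 : ℕ) :
    cnt ω b c (L1 + L2) = cnt ω b c L1 + cnt ω b (c + L1) L2 := by
  simp [cnt, win_add, List.count_append]

theorem cnt_shift (hper : (fun t => ω (t + p)) = ω) (b : Bool) (c : ℤ) :
    cnt ω b (c + 1) p = cnt ω b c p := by
  have h1 : cnt ω b c (p + 1) = cnt ω b c p + cnt ω b (c + p) 1 := cnt_add ω b c p 1
  have h2 : cnt ω b c (1 + p) = cnt ω b c 1 + cnt ω b (c + 1) p := cnt_add ω b c 1 p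
  rw [Nat.add_comm p 1] at h1
  rw [h1] at h2
  have h3 : cnt ω b (c + p) 1 = cnt ω b c 1 := by
    simp [cnt, win_one, per_point ω p hper c]
  omega

theorem cnt_window (hper : (fun t => ω (t + p)) = ω) (b : Bool) (c : ℤ) :
    cnt ω b c p = cnt ω b 0 p := by
  induction c using Int.induction_on with
  | zero => rfl
  | succ k ih => rw [cnt_shift ω p hper]; exact ih
  | pred k ih =>
      have h := cnt_shift ω p hper b (-(k:ℤ) - 1)
      rw [show (-(k:ℤ) - 1) + 1 = -(k:ℤ) by ring] at h
      rw [h] at ih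
      exact ih

theorem cnt_mul (hper : (fun t => ω (t + p)) = ω) (b : Bool) (c : ℤ) (k : ℕ) :
    cnt ω b c (k * p) = k * cnt ω b 0 p := by
  induction k generalizing c with
  | zero => simp [cnt, win]
  | succ k ih =>
      rw [Nat.succ_mul, cnt_add, ih, cnt_window ω p hper b (c + ((k*p : ℕ) : ℤ))]
      ring

theorem cnt_mono (b : Bool) (c : ℤ) {L1 L2 : ℕ} (h : L1 ≤ L2) : cnt ω b c L1 ≤ cnt ω b c L2 := by
  obtain ⟨d, rfl⟩ := Nat.exists_eq_add_of_le h
  rw [cnt_add]; omega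

theorem cnt_lower (hper : (fun t => ω (t + p)) = ω) (b : Bool) (c : ℤ) (L : ℕ) :
    (L / p) * cnt ω b 0 p ≤ cnt ω b c L := by
  calc (L/p) * cnt ω b 0 p = cnt ω b c ((L/p) * p) := (cnt_mul ω p hper b c _).symm
    _ ≤ cnt ω b c L := cnt_mono ω b c (Nat.div_mul_le_self L p)

theorem cnt_upper (hper : (fun t => ω (t + p)) = ω) (hp : 1 ≤ p) (b : Bool) (c : ℤ) (L : ℕ) :
    cnt ω b c L ≤ (L / p + 1) * cnt ω b 0 p := by
  calc cnt ω b c L ≤ cnt ω b c ((L/p + 1) * p) := by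
        apply cnt_mono
        have h1 := Nat.div_add_mod L p
        have h2 := Nat.mod_lt L (show 0 < p by omega)
        have h3 : (L/p+1)*p = p*(L/p) + p := by ring
        omega
    _ = (L/p+1) * cnt ω b 0 p := cnt_mul ω p hper b c _

/-! ### Length and letter counts of basic blocks -/

theorem bb_split (ξ : ℕ × ℕ → Bool) (x y : ℕ) :
    basicBlock ξ (x + 1, y + 1) =
      if ξ (x + 1, y + 1) then basicBlock ξ (x, y + 1) ++ basicBlock ξ (x + 1, y)
      else basicBlock ξ (x + 1, y) ++ basicBlock ξ (x, y + 1) := by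
  rw [basicBlock]

theorem bb_length (ξ : ℕ × ℕ → Bool) : ∀ v : ℕ × ℕ, v ≠ (0,0) → (basicBlock ξ v).length = (v.1+v.2).choose v.1 := by
  intro v
  induction v using basicBlock.induct (ξ := ξ) with
  | case1 => simp
  | case2 x => intro _; simp [basicBlock, Nat.choose_self]
  | case3 y => intro _; simp [basicBlock]
  | case4 x y h ih1 ih2 =>
      intro _
      simp only [basicBlock, if_pos h, List.length_append]
      rw [ih1 (by simp), ih2 (by simp)]
      simp only []
      have : (x + (y+1)).choose x + (x + 1 + y).choose (x+1) = (x+1+(y+1)).choose (x+1) := by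
        rw [show x+1+(y+1) = (x + (y+1)) + 1 by omega, Nat.choose_succ_succ']
        congr 2
        omega
      simp only [Nat.succ_eq_add_one] at *; omega
  | case5 x y h ih1 ih2 =>
      intro _
      simp only [basicBlock, if_neg h, List.length_append]
      rw [ih1 (by simp), ih2 (by simp)]
      simp only []
      have : (x + (y+1)).choose x + (x + 1 + y).choose (x+1) = (x+1+(y+1)).choose (x+1) := by
        rw [show x+1+(y+1) = (x + (y+1)) + 1 by omega, Nat.choose_succ_succ']
        congr 2
        omega
      simp only [Nat.succ_eq_add_one] at *; omega

theorem bb_count_true (ξ : ℕ × ℕ → Bool) : ∀ v : ℕ × ℕ, v ≠ (0,0) →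
    (basicBlock ξ v).count true = (v.1+v.2-1).choose v.1 := by
  intro v
  induction v using basicBlock.induct (ξ := ξ) with
  | case1 => simp
  | case2 x => intro _; simp [basicBlock, Nat.choose_eq_zero_of_lt (by omega : x < x+1)]
  | case3 y => intro _; simp [basicBlock]
  | case4 x y h ih1 ih2 =>
      intro _
      simp only [basicBlock, if_pos h, List.count_append]
      rw [ih1 (by simp), ih2 (by simp)]
      simp only []
      have : (x + (y+1)-1).choose x + (x + 1 + y-1).choose (x+1) = (x+1+(y+1)-1).choose (x+1) := by
        rw [show x+1+(y+1)-1 = (x + y) + 1 by omega, Nat.choose_succ_succ']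
        congr 2 <;> omega
      simp only [Nat.succ_eq_add_one] at *; omega
  | case5 x y h ih1 ih2 =>
      intro _
      simp only [basicBlock, if_neg h, List.count_append]
      rw [ih1 (by simp), ih2 (by simp)]
      simp only []
      have : (x + (y+1)-1).choose x + (x + 1 + y-1).choose (x+1) = (x+1+(y+1)-1).choose (x+1) := by
        rw [show x+1+(y+1)-1 = (x + y) + 1 by omega, Nat.choose_succ_succ']
        congr 2 <;> omega
      simp only [Nat.succ_eq_add_one] at *; omega

theorem count_true_add_count_false (l : List Bool) : l.count true + l.count false = l.length := by
  induction l with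
  | nil => simp
  | cons a l ih => cases a <;> simp [List.count_cons] <;> omega

theorem choose_le_two_pow (n k : ℕ) : n.choose k ≤ 2^n := by
  induction n generalizing k with
  | zero => cases k <;> simp [Nat.choose]
  | succ n ih =>
      cases k with
      | zero => simp [Nat.one_le_two_pow]
      | succ k =>
          rw [Nat.choose_succ_succ, pow_succ, Nat.mul_two]
          exact Nat.add_le_add (ih k) (ih (k+1))

/-! ### The decomposition of a basic block into pieces at level n -/

def pieces (ξ : ℕ × ℕ → Bool) (n : ℕ) : ℕ × ℕ → List (ℕ × ℕ)
  | (0, y) => [(0, y)]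
  | (x + 1, 0) => [(x + 1, 0)]
  | (1, y + 1) => [(1, y + 1)]
  | (x + 2, 1) => [(x + 2, 1)]
  | (x + 2, y + 2) =>
      if x + 2 + (y + 2) ≤ n then [(x+2, y+2)]
      else if ξ (x + 2, y + 2) then pieces ξ n (x + 1, y + 2) ++ pieces ξ n (x + 2, y + 1)
      else pieces ξ n (x + 2, y + 1) ++ pieces ξ n (x + 1, y + 2)
  termination_by v => v.1 + v.2

theorem pieces_join (ξ : ℕ × ℕ → Bool) (n : ℕ) : ∀ v : ℕ × ℕ,
    ((pieces ξ n v).map (basicBlock ξ)).flatten = basicBlock ξ v := by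
  intro v
  induction v using pieces.induct (ξ := ξ) (n := n) with
  | case1 y => simp [pieces]
  | case2 x => simp [pieces]
  | case3 y => simp [pieces]
  | case4 x => simp [pieces]
  | case5 x y h => simp [pieces, h]
  | case6 x y h hξ ih1 ih2 =>
      have e : pieces ξ n (x+2, y+2) = pieces ξ n (x + 1, y + 2) ++ pieces ξ n (x + 2, y + 1) := by
        rw [pieces, if_neg h, if_pos hξ]
      simp only [Nat.succ_eq_add_one, show x + 1 + 1 = x + 2 from rfl, show y + 1 + 1 = y + 2 from rfl]
      rw [e, List.map_append, List.flatten_append, ih1, ih2]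
      have e2 := bb_split ξ (x+1) (y+1)
      simp only [show x + 1 + 1 = x + 2 from rfl, show y + 1 + 1 = y + 2 from rfl] at e2
      rw [e2, if_pos hξ]
  | case7 x y h hξ ih1 ih2 =>
      have e : pieces ξ n (x+2, y+2) = pieces ξ n (x + 2, y + 1) ++ pieces ξ n (x + 1, y + 2) := by
        rw [pieces, if_neg h, if_neg hξ]
      simp only [Nat.succ_eq_add_one, show x + 1 + 1 = x + 2 from rfl, show y + 1 + 1 = y + 2 from rfl]
      rw [e, List.map_append, List.flatten_append, ih1, ih2]
      have e2 := bb_split ξ (x+1) (y+1)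
      simp only [show x + 1 + 1 = x + 2 from rfl, show y + 1 + 1 = y + 2 from rfl] at e2
      rw [e2, if_neg hξ]

theorem pieces_spec (ξ : ℕ × ℕ → Bool) (n : ℕ) : ∀ v : ℕ × ℕ,
    1 ≤ v.1 → 1 ≤ v.2 → n ≤ v.1 + v.2 →
    ∀ u ∈ pieces ξ n v,
      1 ≤ u.1 ∧ 1 ≤ u.2 ∧ n ≤ u.1 + u.2 ∧ (u.1 = 1 ∨ u.2 = 1 ∨ u.1 + u.2 = n) := by
  intro v
  induction v using pieces.induct (ξ := ξ) (n := n) with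
  | case1 y => intro h1 _ _; simp at h1
  | case2 x => intro _ h2 _; simp at h2
  | case3 y =>
      intro h1 h2 h3 u hu
      simp only [pieces, List.mem_singleton] at hu
      subst hu
      exact ⟨by simp, by simpa using h2, by simpa using h3, by simp⟩
  | case4 x =>
      intro h1 h2 h3 u hu
      simp only [pieces, List.mem_singleton] at hu
      subst hu
      exact ⟨by simpa using h1, by simp, by simpa using h3, by simp⟩
  | case5 x y h =>
      intro h1 h2 h3 u hu
      simp only [pieces, if_pos h, List.mem_singleton] at hu
      subst hu
      simp only [Nat.succ_eq_add_one]
      refine ⟨by omega, by omega, by simpa using h3, ?_⟩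
      right; right
      simp only [Nat.succ_eq_add_one] at h3 ⊢
      omega
  | case6 x y h hξ ih1 ih2 =>
      intro h1 h2 h3 u hu
      have e : pieces ξ n (x+2, y+2) = pieces ξ n (x + 1, y + 2) ++ pieces ξ n (x + 2, y + 1) := by
        rw [pieces, if_neg h, if_pos hξ]
      simp only [Nat.succ_eq_add_one, show x + 1 + 1 = x + 2 from rfl, show y + 1 + 1 = y + 2 from rfl] at hu
      rw [e, List.mem_append] at hu
      rcases hu with hu | hu
      · exact ih1 (by omega) (by omega) (by simp; omega) u hu
      · exact ih2 (by omega) (by omega) (by simp; omega) u hu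
  | case7 x y h hξ ih1 ih2 =>
      intro h1 h2 h3 u hu
      have e : pieces ξ n (x+2, y+2) = pieces ξ n (x + 2, y + 1) ++ pieces ξ n (x + 1, y + 2) := by
        rw [pieces, if_neg h, if_neg hξ]
      simp only [Nat.succ_eq_add_one, show x + 1 + 1 = x + 2 from rfl, show y + 1 + 1 = y + 2 from rfl] at hu
      rw [e, List.mem_append] at hu
      rcases hu with hu | hu
      · exact ih1 (by omega) (by omega) (by simp; omega) u hu
      · exact ih2 (by omega) (by omega) (by simp; omega) u hu

/-! ### Splitting an infix of a concatenation -/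

variable {α β : Type*}

theorem prefix_split {W A B : List β} (hW : W <+: A ++ B) :
    (W <+: A) ∨ ∃ W', W = A ++ W' ∧ W' <+: B := by
  by_cases hlen : W.length ≤ A.length
  · exact Or.inl (List.prefix_of_prefix_length_le hW (A.prefix_append B) hlen)
  · right
    have hw := List.prefix_iff_eq_take.mp hW
    rw [List.take_append] at hw
    rw [List.take_of_length_le (by omega)] at hw
    exact ⟨List.take (W.length - A.length) B, hw, List.take_prefix _ _⟩

theorem suffix_split {W A B : List β} (hW : W <:+ A ++ B) :
    (W <:+ B) ∨ ∃ W', W = W' ++ B ∧ W' <:+ A := by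
  by_cases hlen : W.length ≤ B.length
  · exact Or.inl (List.suffix_of_suffix_length_le hW (List.suffix_append A B) hlen)
  · right
    have hw := List.suffix_iff_eq_drop.mp hW
    rw [List.drop_append] at hw
    have hWlen : W.length ≤ A.length + B.length := by
      have := hW.length_le; simpa using this
    rw [List.length_append] at hw
    rw [show A.length + B.length - W.length - A.length = 0 by omega, List.drop_zero] at hw
    exact ⟨List.drop (A.length + B.length - W.length) A, hw, List.drop_suffix _ _⟩

variable (f : α → List β)

theorem prefix_glue : ∀ (l : List α) (W : List β), W <+: (l.map f).flatten →
    ∃ (l₂ : List α) (t : List β), W = (l₂.map f).flatten ++ t ∧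
      (t = [] ∨ ∃ u ∈ l, t <+: f u) ∧ ∀ u ∈ l₂, u ∈ l := by
  intro l
  induction l with
  | nil =>
      intro W hW
      simp only [List.map_nil, List.flatten_nil, List.prefix_nil] at hW
      exact ⟨[], [], by simp [hW], Or.inl rfl, by simp⟩
  | cons a l ih =>
      intro W hW
      simp only [List.map_cons, List.flatten_cons] at hW
      rcases prefix_split hW with h | ⟨W', rfl, hW'⟩
      · exact ⟨[], W, by simp, Or.inr ⟨a, by simp, h⟩, by simp⟩
      · obtain ⟨l₂, t, h1, h2, h3⟩ := ih W' hW'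
        refine ⟨a :: l₂, t, by simp [h1], ?_, ?_⟩
        · rcases h2 with rfl | ⟨u, hu, hp⟩
          · exact Or.inl rfl
          · exact Or.inr ⟨u, by simp [hu], hp⟩
        · intro u hu
          rcases List.mem_cons.mp hu with rfl | hu
          · simp
          · simp [h3 u hu]

theorem suffix_glue : ∀ (l : List α) (W : List β), W <:+ (l.map f).flatten →
    ∃ (s : List β) (l₂ : List α), W = s ++ (l₂.map f).flatten ∧
      (s = [] ∨ ∃ u ∈ l, s <:+ f u) ∧ ∀ u ∈ l₂, u ∈ l := by
  intro l
  induction l with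
  | nil =>
      intro W hW
      simp only [List.map_nil, List.flatten_nil, List.suffix_nil] at hW
      exact ⟨[], [], by simp [hW], Or.inl rfl, by simp⟩
  | cons a l ih =>
      intro W hW
      simp only [List.map_cons, List.flatten_cons] at hW
      rcases suffix_split hW with h | ⟨W', rfl, hW'⟩
      · obtain ⟨s, l₂, h1, h2, h3⟩ := ih W h
        refine ⟨s, l₂, h1, ?_, fun u hu => by simp [h3 u hu]⟩
        rcases h2 with rfl | ⟨u, hu, hp⟩
        · exact Or.inl rfl
        · exact Or.inr ⟨u, by simp [hu], hp⟩
      · exact ⟨W', l, by simp, Or.inr ⟨a, by simp, hW'⟩, by intro u hu; simp [hu]⟩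

theorem infix_glue (l : List α) (W : List β) (hW : W <:+: (l.map f).flatten) :
    ∃ (s t : List β) (l₂ : List α), W = s ++ (l₂.map f).flatten ++ t ∧
      (s = [] ∨ ∃ u ∈ l, s <:+: f u) ∧ (t = [] ∨ ∃ u ∈ l, t <:+: f u) ∧
      ∀ u ∈ l₂, u ∈ l := by
  obtain ⟨pre, suf, hps⟩ := hW
  have hV : W ++ suf <:+ (l.map f).flatten := ⟨pre, by rw [← List.append_assoc]; exact hps⟩
  obtain ⟨s, l₂, h1, h2, h3⟩ := suffix_glue f l (W ++ suf) hV
  have hWpre : W <+: s ++ (l₂.map f).flatten := ⟨suf, h1⟩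
  rcases prefix_split hWpre with h | ⟨W₂, rfl, hW₂⟩
  · rcases h2 with rfl | ⟨u, hu, hs⟩
    · simp only [List.prefix_nil] at h
      exact ⟨[], [], [], by simp [h], Or.inl rfl, Or.inl rfl, by simp⟩
    · refine ⟨W, [], [], by simp, Or.inr ⟨u, hu, h.isInfix.trans hs.isInfix⟩, Or.inl rfl, by simp⟩
  · obtain ⟨l₃, t, g1, g2, g3⟩ := prefix_glue f l₂ W₂ hW₂
    refine ⟨s, t, l₃, by rw [g1, List.append_assoc], ?_, ?_, fun u hu => h3 u (g3 u hu)⟩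
    · rcases h2 with rfl | ⟨u, hu, hs⟩
      · exact Or.inl rfl
      · exact Or.inr ⟨u, hu, hs.isInfix⟩
    · rcases g2 with rfl | ⟨u, hu, ht⟩
      · exact Or.inl rfl
      · exact Or.inr ⟨u, h3 u hu, ht.isInfix⟩

/-! ### Binomial arithmetic -/

theorem choose_mono_left (n : ℕ) : ∀ j k : ℕ, k ≤ j → j ≤ n/2 → n.choose k ≤ n.choose j := by
  intro j
  induction j with
  | zero => intro k hk _; interval_cases k; rfl
  | succ j ih =>
      intro k hk hj
      rcases Nat.eq_or_lt_of_le hk with rfl | hlt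
      · rfl
      · calc n.choose k ≤ n.choose j := ih k (by omega) (by omega)
          _ ≤ n.choose (j+1) := Nat.choose_le_succ_of_lt_half_left (by omega)

theorem choose_two_le (n i : ℕ) (h1 : 2 ≤ i) (h2 : i + 2 ≤ n) : n.choose 2 ≤ n.choose i := by
  by_cases hhalf : i ≤ n/2
  · exact choose_mono_left n i 2 h1 hhalf
  · have hin : i ≤ n := by omega
    rw [← Nat.choose_symm hin]
    exact choose_mono_left n (n-i) 2 (by omega) (by omega)

theorem choose_identity (n i : ℕ) (h1 : 1 ≤ i) (h2 : i + 1 ≤ n) :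
    n * ((n-1).choose i) = (n - i) * (n.choose i) := by
  have habs := Nat.add_one_mul_choose_eq (n-1) (i-1)
  rw [show n - 1 + 1 = n by omega, show i - 1 + 1 = i by omega] at habs
  have hpas : n.choose i = (n-1).choose i + (n-1).choose (i-1) := by
    have := Nat.choose_succ_succ' (n-1) (i-1)
    rw [show n - 1 + 1 = n by omega, show i - 1 + 1 = i by omega] at this
    omega
  have h5 : n * (n.choose i) = n * ((n-1).choose i) + n * ((n-1).choose (i-1)) := by
    rw [hpas, Nat.mul_add]
  have h4 : (n-i) * (n.choose i) + i * (n.choose i) = n * (n.choose i) := by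
    rw [← Nat.add_mul, Nat.sub_add_cancel (by omega)]
  have h6 : i * (n.choose i) = (n.choose i) * i := Nat.mul_comm _ _
  omega

theorem core (p q i n ℓ T : ℕ) (hp : 1 ≤ p) (hq1 : 1 ≤ q) (hq2 : q + 1 ≤ p)
    (hn : n = 2*p^2 + 1) (hi1 : 2 ≤ i) (hi2 : i + 2 ≤ n)
    (hℓ : ℓ = n.choose i) (hT : T = (n-1).choose i)
    (hlow : (ℓ/p)*q ≤ T) (hup : T ≤ (ℓ/p + 1)*q) : False := by
  have hid : n*T = (n-i)*ℓ := by rw [hT, hℓ]; exact choose_identity n i (by omega) (by omega)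
  set m := n - i with hm
  have hl2 : n*p^2 ≤ ℓ := by
    rw [hℓ]
    calc n*p^2 = n.choose 2 := by
          rw [Nat.choose_two_right, show n - 1 = 2*p^2 by omega,
            show n*(2*p^2) = (n*p^2)*2 by ring, Nat.mul_div_cancel _ (by norm_num)]
      _ ≤ n.choose i := choose_two_le n i hi1 hi2
  have hA1 : (ℓ/p)*p ≤ ℓ := Nat.div_mul_le_self ℓ p
  have hA2 : ℓ < (ℓ/p)*p + p := by
    have h1 := Nat.div_add_mod ℓ p
    have h2 := Nat.mod_lt ℓ (show 0 < p by omega)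
    have h3 : p*(ℓ/p) = (ℓ/p)*p := Nat.mul_comm _ _
    omega
  generalize hAg : ℓ/p = A at hlow hup hA1 hA2
  have hneq : p*m ≠ q*n := by
    intro heq
    have h1 : p ∣ q*n := heq ▸ Dvd.intro m rfl
    have h2 : p ∣ q*(2*p^2) := ⟨q*(2*p), by ring⟩
    have h3 : q*n - q*(2*p^2) = q := by
      rw [hn, Nat.mul_add]
      simp
    have h4 : p ∣ q := h3 ▸ Nat.dvd_sub h1 h2
    have := Nat.le_of_dvd (by omega) h4
    omega
  have hfin : ℓ ≤ q*n*p := by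
    rcases Nat.lt_or_ge (p*m) (q*n) with hlt | hge
    · have key1 : (p*m)*ℓ + ℓ ≤ (q*n)*ℓ := by
        calc (p*m)*ℓ + ℓ = (p*m + 1)*ℓ := by ring
          _ ≤ (q*n)*ℓ := Nat.mul_le_mul_right ℓ (by omega)
      have key2 : (q*n)*ℓ ≤ (q*n)*A*p + (q*n)*p := by
        calc (q*n)*ℓ ≤ (q*n)*(A*p+p) := Nat.mul_le_mul_left _ (by omega)
          _ = (q*n)*A*p + (q*n)*p := by ring
      have key3 : (q*n)*A*p ≤ (p*m)*ℓ := by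
        calc (q*n)*A*p = (A*q)*(n*p) := by ring
          _ ≤ T*(n*p) := Nat.mul_le_mul_right _ hlow
          _ = (n*T)*p := by ring
          _ = (m*ℓ)*p := by rw [hid]
          _ = (p*m)*ℓ := by ring
      omega
    · have key1 : (q*n)*ℓ + ℓ ≤ (p*m)*ℓ := by
        calc (q*n)*ℓ + ℓ = (q*n + 1)*ℓ := by ring
          _ ≤ (p*m)*ℓ := Nat.mul_le_mul_right ℓ (by omega)
      have key2 : (p*m)*ℓ = (n*T)*p := by rw [hid]; ring
      have key3 : (n*T)*p ≤ (q*n)*A*p + (q*n)*p := by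
        calc (n*T)*p ≤ (n*((A+1)*q))*p := by
              apply Nat.mul_le_mul_right
              exact Nat.mul_le_mul_left _ hup
          _ = (q*n)*A*p + (q*n)*p := by ring
      have key4 : (q*n)*A*p ≤ (q*n)*ℓ := by
        calc (q*n)*A*p = (q*n)*(A*p) := by ring
          _ ≤ (q*n)*ℓ := Nat.mul_le_mul_left _ hA1
      omega
  have hcontra : (n*p)*p ≤ (n*p)*q := by
    calc (n*p)*p = n*p^2 := by ring
      _ ≤ ℓ := hl2
      _ ≤ q*n*p := hfin
      _ = (n*p)*q := by ring
  have hn1 : 0 < n := by rw [hn]; positivity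
  have := Nat.le_of_mul_le_mul_left hcontra (Nat.mul_pos (by omega) (by omega))
  omega

end S16

namespace S16

theorem dispatch (ω : ℤ → Bool) (p : ℕ) (hp : 1 ≤ p) (hper : (fun t => ω (t + p)) = ω)
    (hqT : 1 ≤ cnt ω true 0 p) (hqF : 1 ≤ cnt ω false 0 p)
    (hqq : cnt ω true 0 p + cnt ω false 0 p = p)
    (ξ : ℕ × ℕ → Bool) (n : ℕ) (hn : n = 2*p^2 + 1)
    (u : ℕ × ℕ) (hu1 : 1 ≤ u.1) (hu2 : 1 ≤ u.2) (hu3 : n ≤ u.1 + u.2)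
    (hu4 : u.1 = 1 ∨ u.2 = 1 ∨ u.1 + u.2 = n)
    (w : List Bool) (c : ℤ) (hc : w = win ω c w.length)
    (hwbb : w <:+: basicBlock ξ u)
    (hlen : w = basicBlock ξ u ∨ 2^n + 1 ≤ w.length) : False := by
  have hnp : 2*p ≤ n := by
    have hpp : p ≤ p*p := Nat.le_mul_of_pos_left p (by omega)
    have hsq : p^2 = p*p := pow_two p
    omega
  have h2n : n < 2^n := Nat.lt_two_pow_self
  have hvne : u ≠ (0,0) := by
    intro h
    rw [h] at hu1
    simp at hu1
  have hblen : (basicBlock ξ u).length = (u.1+u.2).choose u.1 := bb_length ξ u hvne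
  have hbcnt : (basicBlock ξ u).count true = (u.1+u.2-1).choose u.1 := bb_count_true ξ u hvne
  have hwc : ∀ b : Bool, w.count b = cnt ω b c w.length := by
    intro b
    conv_lhs => rw [hc]
    rfl
  have hbsum := count_true_add_count_false (basicBlock ξ u)
  by_cases c1 : u.1 = 1
  · -- block has at most one `false`
    have e1 : (u.1+u.2).choose u.1 = u.1+u.2 := by rw [c1, Nat.choose_one_right]
    have e2 : (u.1+u.2-1).choose u.1 = u.1+u.2-1 := by rw [c1, Nat.choose_one_right]
    have hcf : (basicBlock ξ u).count false ≤ 1 := by omega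
    have hwcf : w.count false ≤ 1 := le_trans (hwbb.count_le false) hcf
    have hwl : 2*p ≤ w.length := by
      rcases hlen with hcomp | hhalf
      · rw [hcomp, hblen]; omega
      · omega
    have hdiv : 2 ≤ w.length / p := (Nat.le_div_iff_mul_le (by omega)).mpr (by omega)
    have hlow := cnt_lower ω p hper false c w.length
    have hmul : 2*1 ≤ (w.length/p) * cnt ω false 0 p := Nat.mul_le_mul hdiv hqF
    rw [← hwc false] at hlow
    omega
  · by_cases c2 : u.2 = 1
    · -- block has at most one `true`
      have e2 : (u.1+u.2-1).choose u.1 = 1 := by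
        rw [show u.1 + u.2 - 1 = u.1 by omega, Nat.choose_self]
      have hct : (basicBlock ξ u).count true ≤ 1 := by omega
      have hwct : w.count true ≤ 1 := le_trans (hwbb.count_le true) hct
      have e1 : (u.1+u.2).choose u.1 = u.1+u.2 := by
        rw [show u.1 + u.2 = u.1 + 1 by omega, Nat.choose_succ_self_right]
      have hwl : 2*p ≤ w.length := by
        rcases hlen with hcomp | hhalf
        · rw [hcomp, hblen]; omega
        · omega
      have hdiv : 2 ≤ w.length / p := (Nat.le_div_iff_mul_le (by omega)).mpr (by omega)
      have hlow := cnt_lower ω p hper true c w.length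
      have hmul : 2*1 ≤ (w.length/p) * cnt ω true 0 p := Nat.mul_le_mul hdiv hqT
      rw [← hwc true] at hlow
      omega
    · have hlev : u.1 + u.2 = n := by
        rcases hu4 with h | h | h
        · exact absurd h c1
        · exact absurd h c2
        · exact h
      rcases hlen with hcomp | hhalf
      · apply core p (cnt ω true 0 p) u.1 n w.length (w.count true) hp hqT (by omega) hn
          (by omega) (by omega) ?_ ?_ ?_ ?_
        · rw [hcomp, hblen, hlev]
        · rw [hcomp, hbcnt, hlev]
        · have hlow := cnt_lower ω p hper true c w.length
          rw [← hwc true] at hlow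
          exact hlow
        · have hup := cnt_upper ω p hper hp true c w.length
          rw [← hwc true] at hup
          exact hup
      · have hl1 : w.length ≤ (basicBlock ξ u).length := hwbb.length_le
        have hl2 : (u.1+u.2).choose u.1 ≤ 2^n := by
          rw [hlev]
          exact choose_le_two_pow n u.1
        omega

end S16


theorem stmt16 (ω : ℤ → Bool) (hω : ω ∈ BigShift) (p : ℕ) (hp : 1 ≤ p)
    (hper : (fun t => ω (t + p)) = ω) : ∀ s t : ℤ, ω s = ω t := by
  by_contra hcon
  push_neg at hcon
  obtain ⟨s0, t0, hst⟩ := hcon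
  obtain ⟨cT, hcT⟩ : ∃ c, ω c = true := by
    cases h1 : ω s0
    · cases h2 : ω t0
      · rw [h1, h2] at hst; exact absurd rfl hst
      · exact ⟨t0, h2⟩
    · exact ⟨s0, h1⟩
  obtain ⟨cF, hcF⟩ : ∃ c, ω c = false := by
    cases h1 : ω s0
    · exact ⟨s0, h1⟩
    · cases h2 : ω t0
      · exact ⟨t0, h2⟩
      · rw [h1, h2] at hst; exact absurd rfl hst
  have hqT : 1 ≤ S16.cnt ω true 0 p := by
    rw [← S16.cnt_window ω p hper true cT]
    calc 1 = S16.cnt ω true cT 1 := by simp [S16.cnt, S16.win_one, hcT]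
      _ ≤ S16.cnt ω true cT p := S16.cnt_mono ω true cT hp
  have hqF : 1 ≤ S16.cnt ω false 0 p := by
    rw [← S16.cnt_window ω p hper false cF]
    calc 1 = S16.cnt ω false cF 1 := by simp [S16.cnt, S16.win_one, hcF]
      _ ≤ S16.cnt ω false cF p := S16.cnt_mono ω false cF hp
  have hqq : S16.cnt ω true 0 p + S16.cnt ω false 0 p = p := by
    have h := S16.count_true_add_count_false (S16.win ω 0 p)
    rw [S16.win_length] at h
    exact h
  set n := 2*p^2 + 1 with hn
  set L := 2*2^n + 2 with hL
  obtain ⟨ξ, V, hWin⟩ := hω 0 L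
  rw [S16.coe_win ω 0 L] at hWin
  have hWlen : (S16.win ω 0 L).length = L := S16.win_length ω 0 L
  have h2n : n < 2^n := Nat.lt_two_pow_self
  obtain ⟨X, Y⟩ := V
  by_cases hX : X = 0
  · subst hX
    have hbl : (basicBlock ξ (0, Y)).length ≤ 1 := by
      cases Y with
      | zero => simp [basicBlock, -Prod.mk_zero_zero]
      | succ y => simp [basicBlock]
    have := hWin.length_le
    rw [hWlen] at this
    omega
  by_cases hY : Y = 0
  · subst hY
    have hbl : (basicBlock ξ (X, 0)).length ≤ 1 := by
      cases X with
      | zero => simp [basicBlock, -Prod.mk_zero_zero]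
      | succ x => simp [basicBlock]
    have := hWin.length_le
    rw [hWlen] at this
    omega
  by_cases hXY : X + Y < n
  · have hbl : (basicBlock ξ (X,Y)).length = (X+Y).choose X :=
      S16.bb_length ξ (X,Y) (by simp [Prod.ext_iff]; omega)
    have h1 : (X+Y).choose X ≤ 2^(X+Y) := S16.choose_le_two_pow _ _
    have h2 : (2:ℕ)^(X+Y) ≤ 2^n := Nat.pow_le_pow_right (by norm_num) (by omega)
    have := hWin.length_le
    rw [hWlen, hbl] at this
    omega
  · have hjoin := S16.pieces_join ξ n (X,Y)
    rw [← hjoin] at hWin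
    obtain ⟨s, t, l₂, hdec, hs, ht, hmem⟩ :=
      S16.infix_glue (basicBlock ξ) (S16.pieces ξ n (X,Y)) _ hWin
    have hspec := S16.pieces_spec ξ n (X,Y) (by simp; omega) (by simp; omega) (by simp; omega)
    cases l₂ with
    | cons u l₂' =>
        have hu := hspec u (hmem u (by simp))
        have hbmem : basicBlock ξ u <:+: S16.win ω 0 L := by
          have h1 : basicBlock ξ u <:+: (((u :: l₂').map (basicBlock ξ))).flatten :=
            List.infix_of_mem_flatten (List.mem_map_of_mem (f := basicBlock ξ) (by simp))
          have h2 : (((u :: l₂').map (basicBlock ξ))).flatten <:+: S16.win ω 0 L :=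
            ⟨s, t, hdec.symm⟩
          exact h1.trans h2
        obtain ⟨c, hc⟩ := S16.win_infix ω _ 0 L hbmem
        exact S16.dispatch ω p hp hper hqT hqF hqq ξ n hn u hu.1 hu.2.1 hu.2.2.1 hu.2.2.2
          _ c hc List.infix_rfl (Or.inl rfl)
    | nil =>
        simp only [List.map_nil, List.flatten_nil, List.append_nil, List.nil_append] at hdec
        have hlen2 : s.length + t.length = L := by
          have := congrArg List.length hdec
          rw [hWlen] at this
          simp at this
          omega
        have hcases : 2^n + 1 ≤ s.length ∨ 2^n + 1 ≤ t.length := by omega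
        rcases hcases with hbig | hbig
        · obtain ⟨u, hu, hsbb⟩ : ∃ u ∈ S16.pieces ξ n (X,Y), s <:+: basicBlock ξ u := by
            rcases hs with rfl | h
            · simp at hbig
            · exact h
          have hsin : s <:+: S16.win ω 0 L := ⟨[], t, by simp [← hdec]⟩
          obtain ⟨c, hc⟩ := S16.win_infix ω s 0 L hsin
          have husp := hspec u hu
          exact S16.dispatch ω p hp hper hqT hqF hqq ξ n hn u husp.1 husp.2.1 husp.2.2.1
            husp.2.2.2 s c hc hsbb (Or.inr hbig)
        · obtain ⟨u, hu, htbb⟩ : ∃ u ∈ S16.pieces ξ n (X,Y), t <:+: basicBlock ξ u := by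
            rcases ht with rfl | h
            · simp at hbig
            · exact h
          have htin : t <:+: S16.win ω 0 L := ⟨s, [], by simp [← hdec]⟩
          obtain ⟨c, hc⟩ := S16.win_infix ω t 0 L htin
          have husp := hspec u hu
          exact S16.dispatch ω p hp hper hqT hqF hqq ξ n hn u husp.1 husp.2.1 husp.2.2.1
            husp.2.2.2 t c hc htbb (Or.inr hbig)
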